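/- Let f_k(r) = r^k e^{-r}/k! and fix T > 0 and 0 < t ≤ T. Then the limit as k → ∞ of (∫_k^{k+t} f_k(r) dr)/(∫_k^{k+T} f_k(r) dr) equals t/T. -/

import Mathlib

open MeasureTheory Filter

/-- The gamma density `f_k(r) = r^k e^{-r}/k!`. -/
noncomputable def gammaDens (k : ℕ) (r : ℝ) : ℝ := r ^ k * Real.exp (-r) / (Nat.factorial k)

lemma gammaDens_continuous (k : ℕ) : Continuous (gammaDens k) := by
  unfold gammaDens
  fun_prop

lemma exponent_bounds {K s T : ℝ} (hK : 1 ≤ K) (hs : 0 ≤ s) (hsT : s ≤ T) :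
    -(T ^ 2 / K) ≤ K * Real.log ((K + s) / K) - s ∧
      K * Real.log ((K + s) / K) - s ≤ 0 := by
  have hK0 : (0:ℝ) < K := lt_of_lt_of_le one_pos hK
  have hKs : (0:ℝ) < K + s := by linarith
  have hy : (0:ℝ) < (K + s) / K := div_pos hKs hK0
  have hup : Real.log ((K + s) / K) ≤ (K + s) / K - 1 :=
    Real.log_le_sub_one_of_pos hy
  have hlo' : Real.log (K / (K + s)) ≤ K / (K + s) - 1 :=
    Real.log_le_sub_one_of_pos (div_pos hK0 hKs)
  have hinv : Real.log (K / (K + s)) = - Real.log ((K + s) / K) := by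
    rw [← Real.log_inv]
    congr 1
    field_simp
  rw [hinv] at hlo'
  have hlo : 1 - K / (K + s) ≤ Real.log ((K + s) / K) := by linarith
  constructor
  · have h1 : K * (1 - K / (K + s)) ≤ K * Real.log ((K + s) / K) :=
      mul_le_mul_of_nonneg_left hlo (le_of_lt hK0)
    have h2 : K * (1 - K / (K + s)) = K * s / (K + s) := by
      field_simp
      ring
    rw [h2] at h1
    have h3 : -(s ^ 2 / K) ≤ K * s / (K + s) - s := by
      rw [div_sub' (ne_of_gt hKs), neg_le, ← neg_div]
      rw [div_le_div_iff₀ hKs hK0]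
      nlinarith
    have h4 : -(T ^ 2 / K) ≤ -(s ^ 2 / K) := by
      have hsq : s ^ 2 ≤ T ^ 2 := by nlinarith
      gcongr
    linarith
  · have := mul_le_mul_of_nonneg_left hup (le_of_lt hK0)
    have h2 : K * ((K + s) / K - 1) = s := by field_simp; ring
    linarith [h2 ▸ this]

lemma gammaDens_bounds {k : ℕ} (hk : 1 ≤ k) {T r : ℝ} (hr1 : (k:ℝ) ≤ r)
    (hr2 : r ≤ k + T) :
    gammaDens k k * Real.exp (-(T ^ 2 / k)) ≤ gammaDens k r ∧
      gammaDens k r ≤ gammaDens k k := by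
  have hK : (1:ℝ) ≤ (k:ℝ) := by exact_mod_cast hk
  have hK0 : (0:ℝ) < (k:ℝ) := lt_of_lt_of_le one_pos hK
  have hr0 : 0 < r := lt_of_lt_of_le hK0 hr1
  have hs : 0 ≤ r - (k:ℝ) := by linarith
  have hsT : r - (k:ℝ) ≤ T := by linarith
  obtain ⟨hlo, hup⟩ := exponent_bounds hK hs hsT
  have hKr : (k:ℝ) + (r - (k:ℝ)) = r := by ring
  rw [hKr] at hlo hup
  have hy : (0:ℝ) < r / (k:ℝ) := div_pos hr0 hK0
  have hfact : r ^ k * Real.exp (-r)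
      = (k:ℝ) ^ k * Real.exp ((k:ℝ) * Real.log (r / (k:ℝ)) - r) := by
    have h1 : Real.exp ((k:ℝ) * Real.log (r / (k:ℝ))) = (r / (k:ℝ)) ^ k := by
      rw [Real.exp_nat_mul, Real.exp_log hy]
    have h2 : (r / (k:ℝ)) ^ k * (k:ℝ) ^ k = r ^ k := by
      rw [div_pow]; field_simp
    rw [sub_eq_add_neg, Real.exp_add, h1, ← h2]
    ring
  have hfacpos : (0:ℝ) < (Nat.factorial k : ℝ) := by
    exact_mod_cast Nat.factorial_pos k
  have key_lo : (k:ℝ) ^ k * Real.exp (-(k:ℝ)) * Real.exp (-(T ^ 2 / (k:ℝ)))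
      ≤ r ^ k * Real.exp (-r) := by
    rw [hfact, mul_assoc, ← Real.exp_add]
    apply mul_le_mul_of_nonneg_left _ (by positivity)
    apply Real.exp_le_exp.mpr
    linarith
  have key_hi : r ^ k * Real.exp (-r) ≤ (k:ℝ) ^ k * Real.exp (-(k:ℝ)) := by
    rw [hfact]
    apply mul_le_mul_of_nonneg_left _ (by positivity)
    apply Real.exp_le_exp.mpr
    linarith
  unfold gammaDens
  constructor
  · rw [div_mul_eq_mul_div]
    gcongr
  · gcongr

theorem stmt_11 (T t : ℝ) (hT : 0 < T) (ht0 : 0 < t) (htT : t ≤ T) :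
    Tendsto (fun k : ℕ =>
        (∫ r in (k : ℝ)..(k + t), gammaDens k r) / (∫ r in (k : ℝ)..(k + T), gammaDens k r))
      atTop (nhds (t / T)) := by
  set c : ℕ → ℝ := fun k => Real.exp (-(T ^ 2 / k)) with hcdef
  have hc1 : Tendsto c atTop (nhds 1) := by
    have h0 : Tendsto (fun k : ℕ => -(T ^ 2 / k)) atTop (nhds 0) := by
      simpa using (tendsto_const_div_atTop_nhds_zero_nat (T ^ 2)).neg
    simpa [hcdef, Function.comp_def] using (Real.continuous_exp.tendsto 0).comp h0
  have hlow : Tendsto (fun k => (t / T) * c k) atTop (nhds (t / T)) := by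
    simpa using (tendsto_const_nhds (x := t / T)).mul hc1
  have hhigh : Tendsto (fun k => (t / T) / c k) atTop (nhds (t / T)) := by
    have := (tendsto_const_nhds (x := t / T) (f := atTop)).div hc1 one_ne_zero
    simpa [Pi.div_def] using this
  apply tendsto_of_tendsto_of_tendsto_of_le_of_le' hlow hhigh
  all_goals
    filter_upwards [eventually_ge_atTop 1] with k hk
  all_goals {
    have hk0 : (0:ℝ) < (k:ℝ) := by exact_mod_cast hk
    have hA : 0 < gammaDens k k := by
      unfold gammaDens
      positivity
    set A : ℝ := gammaDens k k with hAdef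
    have hck : 0 < c k := Real.exp_pos _
    have hInt1 : IntervalIntegrable (gammaDens k) volume (k : ℝ) (k + t) :=
      (gammaDens_continuous k).intervalIntegrable _ _
    have hInt2 : IntervalIntegrable (gammaDens k) volume (k : ℝ) (k + T) :=
      (gammaDens_continuous k).intervalIntegrable _ _
    have hnum_ub : (∫ r in (k : ℝ)..(k + t), gammaDens k r) ≤ t * A := by
      have h := intervalIntegral.integral_mono_on (by linarith : (k:ℝ) ≤ k + t) hInt1
        (intervalIntegrable_const) (fun x hx => (gammaDens_bounds hk hx.1
          (by linarith [hx.2] : x ≤ k + T)).2)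
      rw [intervalIntegral.integral_const, smul_eq_mul] at h
      calc (∫ r in (k : ℝ)..(k + t), gammaDens k r) ≤ ((k:ℝ) + t - k) * A := h
        _ = t * A := by ring
    have hnum_lb : t * (A * c k) ≤ ∫ r in (k : ℝ)..(k + t), gammaDens k r := by
      have h := intervalIntegral.integral_mono_on (by linarith : (k:ℝ) ≤ k + t)
        (intervalIntegrable_const) hInt1 (fun x hx => (gammaDens_bounds hk hx.1
          (by linarith [hx.2] : x ≤ k + T)).1)
      rw [intervalIntegral.integral_const, smul_eq_mul] at h
      calc t * (A * c k) = ((k:ℝ) + t - k) * (A * c k) := by ring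
        _ ≤ _ := h
    have hden_ub : (∫ r in (k : ℝ)..(k + T), gammaDens k r) ≤ T * A := by
      have h := intervalIntegral.integral_mono_on (by linarith : (k:ℝ) ≤ k + T) hInt2
        (intervalIntegrable_const) (fun x hx => (gammaDens_bounds hk hx.1 hx.2).2)
      rw [intervalIntegral.integral_const, smul_eq_mul] at h
      calc (∫ r in (k : ℝ)..(k + T), gammaDens k r) ≤ ((k:ℝ) + T - k) * A := h
        _ = T * A := by ring
    have hden_lb : T * (A * c k) ≤ ∫ r in (k : ℝ)..(k + T), gammaDens k r := by
      have h := intervalIntegral.integral_mono_on (by linarith : (k:ℝ) ≤ k + T)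
        (intervalIntegrable_const) hInt2 (fun x hx => (gammaDens_bounds hk hx.1 hx.2).1)
      rw [intervalIntegral.integral_const, smul_eq_mul] at h
      calc T * (A * c k) = ((k:ℝ) + T - k) * (A * c k) := by ring
        _ ≤ _ := h
    have hden_pos : 0 < ∫ r in (k : ℝ)..(k + T), gammaDens k r := by
      have : 0 < T * (A * c k) := by positivity
      linarith
    first
    | calc (t / T) * c k = (t * (A * c k)) / (T * A) := by
            field_simp
        _ ≤ _ := div_le_div₀ (le_trans (by positivity) hnum_lb) hnum_lb hden_pos hden_ub
    | calc (∫ r in (k : ℝ)..(k + t), gammaDens k r) / (∫ r in (k : ℝ)..(k + T), gammaDens k r)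
          ≤ (t * A) / (T * (A * c k)) :=
            div_le_div₀ (by positivity) hnum_ub (by positivity) hden_lb
        _ = (t / T) / c k := by field_simp
  }
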